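/- Let K be a compact Hausdorff space, B the open unit ball of the complex Banach space C(K), and f₀ ∈ B. Then the map T : B → C(K), T(f) = (f - f₀)/(1 - conj(f₀)·f), is Fréchet differentiable in the complex sense at every f ∈ B, with derivative the bounded linear map L : C(K) → C(K) given by L(h) = ((1 - |f₀|²)/(1 - conj(f₀)·f)²)·h. -/

import Mathlib

open Metric Filter Topology

namespace ClusterValue

variable (X : Type*) [NormedAddCommGroup X] [NormedSpace ℂ X]

/-- Membership in `A_u(B)`: analytic on the open unit ball, bounded there,
and uniformly continuous there. -/
def MemAu (f : X → ℂ) : Prop :=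
  AnalyticOn ℂ f (ball (0 : X) 1) ∧ (∃ C : ℝ, ∀ x ∈ ball (0 : X) 1, ‖f x‖ ≤ C) ∧
    UniformContinuousOn f (ball (0 : X) 1)

/-- Membership in `H^∞(B)`: analytic on the open unit ball and bounded there. -/
def MemHinf (f : X → ℂ) : Prop :=
  AnalyticOn ℂ f (ball (0 : X) 1) ∧ (∃ C : ℝ, ∀ x ∈ ball (0 : X) 1, ‖f x‖ ≤ C)

/-- A character (nonzero continuous multiplicative linear functional) of the algebra
of functions on the open unit ball of `X` determined by the membership predicate `Mem`.
Functions are identified when they agree on the ball. -/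
structure Character (Mem : (X → ℂ) → Prop) : Type _ where
  toFun : (X → ℂ) → ℂ
  congr' : ∀ f g, Mem f → Mem g → (∀ x ∈ ball (0 : X) 1, f x = g x) → toFun f = toFun g
  map_add' : ∀ f g, Mem f → Mem g → toFun (f + g) = toFun f + toFun g
  map_mul' : ∀ f g, Mem f → Mem g → toFun (f * g) = toFun f * toFun g
  map_smul' : ∀ (c : ℂ) (f), Mem f → toFun (c • f) = c * toFun f
  map_one' : toFun 1 = 1
  continuous' : ∃ C : ℝ, ∀ (f : X → ℂ) (M : ℝ), Mem f →
    (∀ x ∈ ball (0 : X) 1, ‖f x‖ ≤ M) → ‖toFun f‖ ≤ C * M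

variable {X}

/-- The fiber over `0`: characters annihilating all continuous linear functionals. -/
def Character.inFiberZero {Mem : (X → ℂ) → Prop} (τ : Character X Mem) : Prop :=
  ∀ φ : X →L[ℂ] ℂ, τ.toFun ⇑φ = 0

/-- The fiber over `x'' ∈ X**`. -/
def Character.inFiber {Mem : (X → ℂ) → Prop} (τ : Character X Mem)
    (x'' : (X →L[ℂ] ℂ) →L[ℂ] ℂ) : Prop :=
  ∀ φ : X →L[ℂ] ℂ, τ.toFun ⇑φ = x'' φ

variable (X)

/-- The cluster set of `f` at `0`: limits of `f` along weakly null nets (filters) in the ball. -/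
def clusterSetZero (f : X → ℂ) : Set ℂ :=
  {z | ∃ l : Filter X, l.NeBot ∧ l ≤ 𝓟 (ball (0 : X) 1) ∧
    (∀ φ : X →L[ℂ] ℂ, Tendsto (fun x => φ x) l (𝓝 0)) ∧ Tendsto f l (𝓝 z)}

/-- The cluster set of `f` at `x'' ∈ X**`: limits of `f` along nets in the ball converging
weak-star to `x''`. -/
def clusterSet (f : X → ℂ) (x'' : (X →L[ℂ] ℂ) →L[ℂ] ℂ) : Set ℂ :=
  {z | ∃ l : Filter X, l.NeBot ∧ l ≤ 𝓟 (ball (0 : X) 1) ∧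
    (∀ φ : X →L[ℂ] ℂ, Tendsto (fun x => φ x) l (𝓝 (x'' φ))) ∧ Tendsto f l (𝓝 z)}

/-- A finite rank (bounded linear) operator. -/
def FiniteRank (S : X →L[ℂ] X) : Prop :=
  FiniteDimensional ℂ ↥(LinearMap.range (S : X →ₗ[ℂ] X))

/-- Finite type polynomials: the subalgebra of functions generated by the
continuous linear functionals (and constants). -/
def IsFiniteTypePoly (p : X → ℂ) : Prop :=
  p ∈ Algebra.adjoin ℂ (Set.range fun φ : X →L[ℂ] ℂ => (⇑φ : X → ℂ))

/-- Membership in `A(B)`: uniform limits on the ball of finite type polynomials. -/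
def MemA (f : X → ℂ) : Prop :=
  ∀ ε > (0 : ℝ), ∃ p : X → ℂ, IsFiniteTypePoly X p ∧ ∀ x ∈ ball (0 : X) 1, ‖f x - p x‖ ≤ ε

/-- A continuous polynomial: a finite sum of (diagonals of) continuous multilinear maps. -/
def IsContPoly (p : X → ℂ) : Prop :=
  ∃ (N : ℕ) (M : ∀ k : ℕ, ContinuousMultilinearMap ℂ (fun _ : Fin k => X) ℂ),
    ∀ x, p x = ∑ k ∈ Finset.range N, M k (fun _ => x)

end ClusterValue

open Metric Filter Topology in
/-- For `f₀` in the open unit ball `B` of `C(K)`, the map `T f = (f - f₀)/(1 - conj f₀ · f)`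
is Fréchet differentiable in the complex sense at every `f ∈ B`, with derivative the bounded
linear map `L h = ((1 - |f₀|²)/(1 - conj f₀ · f)²) · h`. -/
theorem statement16 (K : Type*) [TopologicalSpace K] [CompactSpace K] [T2Space K]
    (f₀ : C(K, ℂ)) (hf₀ : f₀ ∈ ball (0 : C(K, ℂ)) 1)
    (T : C(K, ℂ) → C(K, ℂ))
    (hT : ∀ g ∈ ball (0 : C(K, ℂ)) 1, ∀ t : K,
      T g t = (g t - f₀ t) / (1 - (starRingEnd ℂ) (f₀ t) * g t)) :
    ∀ f ∈ ball (0 : C(K, ℂ)) 1, ∃ L : C(K, ℂ) →L[ℂ] C(K, ℂ),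
      (∀ (h : C(K, ℂ)) (t : K),
        L h t = ((1 - (starRingEnd ℂ) (f₀ t) * f₀ t) /
          (1 - (starRingEnd ℂ) (f₀ t) * f t) ^ 2) * h t) ∧
      HasFDerivAt T L f := by
  intro f hf
  have hf₀' : ‖f₀‖ < 1 := by simpa using hf₀
  set c : C(K, ℂ) := star f₀ with hc
  have hnc : ‖c‖ = ‖f₀‖ := norm_star f₀
  have key : ∀ g : C(K, ℂ), g ∈ ball (0 : C(K, ℂ)) 1 → ‖c * g‖ < 1 := by
    intro g hg
    have hg' : ‖g‖ < 1 := by simpa using hg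
    calc ‖c * g‖ ≤ ‖c‖ * ‖g‖ := norm_mul_le _ _
      _ < 1 := by nlinarith [norm_nonneg c, norm_nonneg g]
  -- pointwise facts about units of C(K, ℂ)
  have unit_mul : ∀ (u : C(K, ℂ)ˣ) (t : K),
      (u : C(K, ℂ)) t * ((↑u⁻¹ : C(K, ℂ)) t) = 1 := by
    intro u t
    have h2 := congrArg (fun φ : C(K, ℂ) => φ t) u.mul_inv
    simp only [ContinuousMap.mul_apply, ContinuousMap.one_apply] at h2
    exact h2
  have unit_ne : ∀ (u : C(K, ℂ)ˣ) (t : K), (u : C(K, ℂ)) t ≠ 0 := fun u t =>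
    left_ne_zero_of_mul_eq_one (unit_mul u t)
  have unit_inv_apply : ∀ (u : C(K, ℂ)ˣ) (t : K),
      (↑u⁻¹ : C(K, ℂ)) t = ((u : C(K, ℂ)) t)⁻¹ := fun u t =>
    (inv_eq_of_mul_eq_one_right (unit_mul u t)).symm
  set u : C(K, ℂ)ˣ := Units.oneSub (c * f) (key f hf) with hu
  have huval : (u : C(K, ℂ)) = 1 - c * f := rfl
  -- pointwise values
  have hct : ∀ t : K, c t = (starRingEnd ℂ) (f₀ t) := by
    intro t
    rw [hc, ContinuousMap.star_apply, starRingEnd_apply]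
  have hut : ∀ t : K, (u : C(K, ℂ)) t = 1 - (starRingEnd ℂ) (f₀ t) * f t := by
    intro t
    rw [huval]
    simp only [ContinuousMap.sub_apply, ContinuousMap.one_apply, ContinuousMap.mul_apply, hct t]
  have hutne : ∀ t : K, (1 : ℂ) - (starRingEnd ℂ) (f₀ t) * f t ≠ 0 := by
    intro t; rw [← hut t]; exact unit_ne u t
  -- the derivative
  refine ⟨ContinuousLinearMap.mul ℂ C(K, ℂ) ((1 - c * f₀) * (↑u⁻¹ : C(K, ℂ)) ^ 2), ?_, ?_⟩
  · intro h t
    simp only [ContinuousLinearMap.mul_apply', ContinuousMap.mul_apply,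
      ContinuousMap.sub_apply, ContinuousMap.one_apply, ContinuousMap.pow_apply]
    rw [unit_inv_apply u t, hut t, hct t]
    have hd := hutne t
    field_simp
  · -- differentiability
    have hdf : HasFDerivAt (fun g : C(K, ℂ) => 1 - c * g)
        (-(ContinuousLinearMap.mul ℂ C(K, ℂ) c)) f := by
      have h1 : HasFDerivAt (fun g : C(K, ℂ) => c * g)
          (ContinuousLinearMap.mul ℂ C(K, ℂ) c) f :=
        (ContinuousLinearMap.mul ℂ C(K, ℂ) c).hasFDerivAt
      exact h1.const_sub 1
    have hinv : HasFDerivAt (fun g : C(K, ℂ) => Ring.inverse (1 - c * g))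
        ((-ContinuousLinearMap.mulLeftRight ℂ C(K, ℂ) ↑u⁻¹ ↑u⁻¹).comp
          (-(ContinuousLinearMap.mul ℂ C(K, ℂ) c))) f :=
      by
        have h0 := hasFDerivAt_ringInverse (𝕜 := ℂ) u
        rw [huval] at h0
        exact h0.comp f hdf
    have hsub : HasFDerivAt (fun g : C(K, ℂ) => g - f₀)
        (ContinuousLinearMap.id ℂ C(K, ℂ)) f := (hasFDerivAt_id f).sub_const f₀
    have hF := hsub.mul' hinv
    have heq : T =ᶠ[𝓝 f] fun g : C(K, ℂ) => (g - f₀) * Ring.inverse (1 - c * g) := by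
      filter_upwards [isOpen_ball.mem_nhds hf] with g hg
      have hug : Ring.inverse ((1 : C(K, ℂ)) - c * g) = ↑(Units.oneSub (c * g) (key g hg))⁻¹ := by
        rw [← Ring.inverse_unit (Units.oneSub (c * g) (key g hg))]; rfl
      ext t
      rw [hT g hg t, hug]
      have h1 : ((Units.oneSub (c * g) (key g hg) : C(K, ℂ))) t
          = 1 - (starRingEnd ℂ) (f₀ t) * g t := by
        show ((1 : C(K, ℂ)) - c * g) t = _
        simp only [ContinuousMap.sub_apply, ContinuousMap.one_apply,
          ContinuousMap.mul_apply, hct t]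
      simp only [ContinuousMap.mul_apply, ContinuousMap.sub_apply]
      rw [unit_inv_apply, h1, div_eq_mul_inv]
    have hT' := hF.congr_of_eventuallyEq heq
    refine hT'.congr_fderiv (Eq.symm ?_)
    refine ContinuousLinearMap.ext fun h => ContinuousMap.ext fun t => ?_
    have hinvval : Ring.inverse ((1 : C(K, ℂ)) - c * f) = (↑u⁻¹ : C(K, ℂ)) := by
      rw [← huval, Ring.inverse_unit]
    simp only [ContinuousLinearMap.add_apply, ContinuousLinearMap.smul_apply,
      ContinuousLinearMap.comp_apply, ContinuousLinearMap.neg_apply,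
      ContinuousLinearMap.mulLeftRight_apply, ContinuousLinearMap.mul_apply',
      ContinuousLinearMap.smulRight_apply, ContinuousLinearMap.id_apply, hinvval,
      smul_eq_mul, ContinuousMap.add_apply, ContinuousMap.mul_apply, ContinuousMap.sub_apply,
      ContinuousMap.neg_apply, ContinuousMap.one_apply, ContinuousMap.pow_apply, op_smul_eq_mul]
    rw [unit_inv_apply u t, hut t, hct t]
    have hd := hutne t
    field_simp
    ring
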